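/- On the von Mises–Fisher model (the m-sphere of radius r in natural coordinates), the normal vectors satisfy B_κ^i(u) = (1/r) θ^i(u) and B_{κi}(u) = (1/r†) η_i(u), where θ(u) = r ξ(u), η(u) = r† ξ(u) with ξ(u) ∈ S^m the standard spherical parametrization and r† ∈ (0,1) a constant. Consequently H^{(1)}_{abκ}(u) = −(1/r†) g_{ab}(u), H^{(−1)}_{abκ}(u) = −(1/r) g_{ab}(u), and R^{(±1)}_{abcd}(u) = (1/(r r†))(g_{ad}g_{bc} − g_{ac}g_{bd}), with metric g_{ab}(u) = δ_{ab} r r† ∏_{c=1}^{a} sin² u^{c−1} (sin² u^0 = 1). -/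

import Mathlib

open Finset Real

noncomputable def pd {m : ℕ} (i : Fin m) (f : (Fin m → ℝ) → ℝ) (x : Fin m → ℝ) : ℝ :=
  fderiv ℝ f x (Pi.single i 1)

noncomputable def vmfH {m : ℕ} (i : ℕ) (e : Fin m) (t : ℝ) : ℝ :=
  if (e : ℕ) < i then Real.sin t else if (e : ℕ) = i then Real.cos t else 1

noncomputable def vmfH' {m : ℕ} (i : ℕ) (e : Fin m) (t : ℝ) : ℝ :=
  if (e : ℕ) < i then Real.cos t else if (e : ℕ) = i then -Real.sin t else 0

noncomputable def vmfH'' {m : ℕ} (i : ℕ) (e : Fin m) (t : ℝ) : ℝ :=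
  if (e : ℕ) < i then -Real.sin t else if (e : ℕ) = i then -Real.cos t else 0

lemma vmfH_deriv {m : ℕ} (i : ℕ) (e : Fin m) (t : ℝ) :
    HasDerivAt (vmfH i e) (vmfH' i e t) t := by
  unfold vmfH vmfH'
  split_ifs
  · exact Real.hasDerivAt_sin t
  · exact Real.hasDerivAt_cos t
  · exact hasDerivAt_const t 1

lemma vmfH'_deriv {m : ℕ} (i : ℕ) (e : Fin m) (t : ℝ) :
    HasDerivAt (vmfH' i e) (vmfH'' i e t) t := by
  unfold vmfH' vmfH''
  split_ifs
  · exact Real.hasDerivAt_cos t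
  · exact (Real.hasDerivAt_sin t).neg
  · exact hasDerivAt_const t 0

lemma vmf_hasFDerivAt_prod {m : ℕ} (F F' : Fin m → ℝ → ℝ)
    (hF : ∀ e t, HasDerivAt (F e) (F' e t) t) (u : Fin m → ℝ) (s : Finset (Fin m)) :
    HasFDerivAt (fun v : Fin m → ℝ => ∏ e ∈ s, F e (v e))
      (∑ e ∈ s, (F' e (u e) * ∏ e' ∈ s.erase e, F e' (u e')) •
        (ContinuousLinearMap.proj e : (Fin m → ℝ) →L[ℝ] ℝ)) u := by
  induction s using Finset.induction_on with
  | empty => simpa using hasFDerivAt_const (1 : ℝ) u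
  | insert _ _ ha ih =>
    rename_i a s
    have h1 : HasFDerivAt (fun v : Fin m → ℝ => F a (v a))
        ((F' a (u a)) • (ContinuousLinearMap.proj a : (Fin m → ℝ) →L[ℝ] ℝ)) u := by
      have := (hF a (u a)).comp_hasFDerivAt u
        ((ContinuousLinearMap.proj a : (Fin m → ℝ) →L[ℝ] ℝ)).hasFDerivAt
      exact this
    have h2 := ih
    have := h1.fun_mul h2
    simp only [Finset.prod_insert ha]
    refine this.congr_fderiv (Eq.symm ?_)
    rw [Finset.sum_insert ha, Finset.erase_insert ha, add_comm, Finset.smul_sum]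
    congr 1
    · exact Finset.sum_congr rfl fun x hx => by
        rw [Finset.erase_insert_of_ne (fun h : a = x => ha (h ▸ hx)),
          Finset.prod_insert (fun h => ha (Finset.mem_of_mem_erase h)), smul_smul]
        ring_nf
    · rw [smul_smul]; ring_nf

lemma vmf_pd_prod {m : ℕ} (F F' : Fin m → ℝ → ℝ)
    (hF : ∀ e t, HasDerivAt (F e) (F' e t) t) (a : Fin m) (u : Fin m → ℝ) :
    pd a (fun v : Fin m → ℝ => ∏ e, F e (v e)) u
      = F' a (u a) * ∏ e' ∈ Finset.univ.erase a, F e' (u e') := by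
  rw [pd, (vmf_hasFDerivAt_prod F F' hF u Finset.univ).fderiv]
  simp [ContinuousLinearMap.proj_apply, Pi.single_apply]

lemma vmf_diff_prod {m : ℕ} (F F' : Fin m → ℝ → ℝ)
    (hF : ∀ e t, HasDerivAt (F e) (F' e t) t) (u : Fin m → ℝ) :
    DifferentiableAt ℝ (fun v : Fin m → ℝ => ∏ e, F e (v e)) u :=
  (vmf_hasFDerivAt_prod F F' hF u Finset.univ).differentiableAt

lemma pd_sum {m : ℕ} {ι : Type*} (s : Finset ι) (f : ι → (Fin m → ℝ) → ℝ)
    (a : Fin m) (u : Fin m → ℝ) (hf : ∀ i ∈ s, DifferentiableAt ℝ (f i) u) :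
    pd a (fun v => ∑ i ∈ s, f i v) u = ∑ i ∈ s, pd a (f i) u := by
  rw [pd, fderiv_fun_sum hf]
  simp [pd]

lemma pd_mul {m : ℕ} (f g : (Fin m → ℝ) → ℝ) (a : Fin m) (u : Fin m → ℝ)
    (hf : DifferentiableAt ℝ f u) (hg : DifferentiableAt ℝ g u) :
    pd a (fun v => f v * g v) u = pd a f u * g u + f u * pd a g u := by
  rw [pd, fderiv_fun_mul hf hg]
  simp [pd]
  ring

lemma pd_const_mul {m : ℕ} (f : (Fin m → ℝ) → ℝ) (c : ℝ) (a : Fin m) (u : Fin m → ℝ)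
    (hf : DifferentiableAt ℝ f u) :
    pd a (fun v => c * f v) u = c * pd a f u := by
  rw [pd, fderiv_const_mul hf]
  simp [pd]

lemma pd_const {m : ℕ} (c : ℝ) (a : Fin m) (u : Fin m → ℝ) :
    pd a (fun _ => c) u = 0 := by
  rw [pd, fderiv_fun_const]
  simp

noncomputable def vmfXi {m : ℕ} (i : ℕ) (u : Fin m → ℝ) : ℝ := ∏ e, vmfH i e (u e)

noncomputable def vmfD {m : ℕ} (i : ℕ) (b : Fin m) (u : Fin m → ℝ) : ℝ :=
  vmfH' i b (u b) * ∏ e ∈ Finset.univ.erase b, vmfH i e (u e)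

noncomputable def vmfK {m : ℕ} (i : ℕ) (b : Fin m) (e : Fin m) : ℝ → ℝ :=
  if e = b then vmfH' i b else vmfH i e

noncomputable def vmfK' {m : ℕ} (i : ℕ) (b : Fin m) (e : Fin m) : ℝ → ℝ :=
  if e = b then vmfH'' i b else vmfH' i e

lemma vmfK_deriv {m : ℕ} (i : ℕ) (b e : Fin m) (t : ℝ) :
    HasDerivAt (vmfK i b e) (vmfK' i b e t) t := by
  unfold vmfK vmfK'
  split_ifs
  · exact vmfH'_deriv i b t
  · exact vmfH_deriv i e t

lemma vmfD_eq_prod {m : ℕ} (i : ℕ) (b : Fin m) (u : Fin m → ℝ) :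
    vmfD i b u = ∏ e, vmfK i b e (u e) := by
  rw [vmfD, ← Finset.mul_prod_erase Finset.univ (fun e => vmfK i b e (u e))
    (Finset.mem_univ b)]
  congr 1
  · simp [vmfK]
  · exact Finset.prod_congr rfl fun e he => by
      simp [vmfK, Finset.ne_of_mem_erase he]

lemma pd_vmfXi {m : ℕ} (i : ℕ) (b : Fin m) (u : Fin m → ℝ) :
    pd b (vmfXi i) u = vmfD i b u := by
  have : vmfXi (m := m) i = fun v => ∏ e, vmfH i e (v e) := rfl
  rw [this, vmf_pd_prod _ (fun e t => vmfH' i e t) (fun e t => vmfH_deriv i e t)]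
  rfl

lemma vmfXi_diff {m : ℕ} (i : ℕ) (u : Fin m → ℝ) :
    DifferentiableAt ℝ (vmfXi (m := m) i) u :=
  vmf_diff_prod _ (fun e t => vmfH' i e t) (fun e t => vmfH_deriv i e t) u

lemma vmfD_diff {m : ℕ} (i : ℕ) (b : Fin m) (u : Fin m → ℝ) :
    DifferentiableAt ℝ (vmfD i b) u := by
  have : vmfD i b = fun v : Fin m → ℝ => ∏ e, vmfK i b e (v e) :=
    funext fun v => vmfD_eq_prod i b v
  rw [this]
  exact vmf_diff_prod _ (fun e t => vmfK' i b e t) (fun e t => vmfK_deriv i b e t) u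

lemma prod_vmfH {m : ℕ} (s : Finset (Fin m)) (i : ℕ) (u : Fin m → ℝ) :
    ∏ e ∈ s, vmfH i e (u e) =
      (∏ e ∈ s.filter (fun e : Fin m => (e : ℕ) < i), Real.sin (u e)) *
      (∏ e ∈ s.filter (fun e : Fin m => (e : ℕ) = i), Real.cos (u e)) := by
  rw [← Finset.prod_filter_mul_prod_filter_not s (fun e : Fin m => (e : ℕ) < i)]
  congr 1
  · exact Finset.prod_congr rfl fun e he => by
      simp [vmfH, (Finset.mem_filter.mp he).2]
  · rw [← Finset.prod_filter_mul_prod_filter_not (s.filter (fun e : Fin m => ¬ (e : ℕ) < i))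
      (fun e : Fin m => (e : ℕ) = i), Finset.filter_filter, Finset.filter_filter]
    have h1 : s.filter (fun e : Fin m => ¬ (e : ℕ) < i ∧ (e : ℕ) = i)
        = s.filter (fun e : Fin m => (e : ℕ) = i) := by
      apply Finset.filter_congr
      intro e _
      constructor
      · exact fun h => h.2
      · exact fun h => ⟨by omega, h⟩
    have h2 : ∏ e ∈ s.filter (fun e : Fin m => ¬ (e : ℕ) < i ∧ ¬ (e : ℕ) = i), vmfH i e (u e) = 1 := by
      apply Finset.prod_eq_one
      intro e he
      have := (Finset.mem_filter.mp he).2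
      simp [vmfH, this.1, this.2]
    rw [h1, h2, mul_one]
    exact Finset.prod_congr rfl fun e he => by
      have he' := (Finset.mem_filter.mp he).2
      simp [vmfH, he']

lemma prod_cos_eval {m : ℕ} (s : Finset (Fin m)) (k : ℕ) (u : Fin m → ℝ) :
    ∏ e ∈ s.filter (fun e : Fin m => (e : ℕ) = k), Real.cos (u e)
      = if h : k < m then (if (⟨k, h⟩ : Fin m) ∈ s then Real.cos (u ⟨k, h⟩) else 1) else 1 := by
  have key : ∀ h : k < m, s.filter (fun e : Fin m => (e : ℕ) = k) = s.filter (fun e => e = ⟨k, h⟩) := by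
    intro h
    apply Finset.filter_congr
    intro e _
    simp [Fin.ext_iff]
  split_ifs with h hmem
  · rw [key h, Finset.prod_filter, Finset.prod_ite_eq' s _ (fun e => Real.cos (u e)), if_pos hmem]
  · rw [key h, Finset.prod_filter, Finset.prod_ite_eq' s _ (fun e => Real.cos (u e)), if_neg hmem]
  · rw [Finset.filter_false_of_mem, Finset.prod_empty]
    intro e _
    have := e.isLt
    omega

lemma vmf_telesumIco (n m : ℕ) (hnm : n ≤ m) (X f : ℕ → ℝ)
    (h2 : ∀ k, n ≤ k → k < m → f k = X k - X (k + 1)) (h3 : f m = X m) :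
    ∑ k ∈ Finset.Ico n (m + 1), f k = X n := by
  rw [Finset.sum_Ico_succ_top (by omega), h3]
  have : ∑ k ∈ Finset.Ico n m, f k = ∑ k ∈ Finset.Ico n m, (X k - X (k + 1)) :=
    Finset.sum_congr rfl fun k hk => by
      have := Finset.mem_Ico.mp hk
      exact h2 k this.1 this.2
  rw [this, Finset.sum_Ico_eq_sum_range]
  have : ∀ j, X (n + j) - X (n + j + 1) = (fun j => X (n + j)) j - (fun j => X (n + j)) (j + 1) := by
    intro j
    simp only []
    ring_nf
  simp only [this]
  rw [Finset.sum_range_sub' (fun j => X (n + j))]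
  have : n + (m - n) = m := by omega
  rw [this]
  ring

lemma vmf_telesum (m b : ℕ) (hb : b < m) (A B : ℝ) (X f : ℕ → ℝ)
    (h0 : ∀ k, k < b → f k = 0)
    (h1 : f b = A * X b)
    (h2 : ∀ k, b < k → k < m → f k = B * (X k - X (k + 1)))
    (h3 : f m = B * X m)
    (h4 : X (b + 1) = X b) :
    ∑ k ∈ Finset.range (m + 1), f k = (A + B) * X b := by
  rw [Finset.range_eq_Ico, ← Finset.sum_Ico_consecutive _ (Nat.zero_le (b + 1)) (by omega : b + 1 ≤ m + 1)]
  have e1 : ∑ k ∈ Finset.Ico 0 (b + 1), f k = A * X b := by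
    rw [← Finset.range_eq_Ico, Finset.sum_range_succ, h1]
    rw [Finset.sum_eq_zero (fun k hk => h0 k (Finset.mem_range.mp hk))]
    ring
  have e2 : ∑ k ∈ Finset.Ico (b + 1) (m + 1), f k = B * X b := by
    rw [vmf_telesumIco (b + 1) m (by omega) (fun k => B * X k) f
      (fun k hk hk' => by rw [h2 k (by omega) hk']; ring) h3, h4]
  rw [e1, e2]
  ring

lemma vmf_telesum0 (m : ℕ) (X f : ℕ → ℝ)
    (h2 : ∀ k, k < m → f k = X k - X (k + 1)) (h3 : f m = X m) :
    ∑ k ∈ Finset.range (m + 1), f k = X 0 := by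
  have := vmf_telesumIco 0 m (Nat.zero_le m) X f (fun k _ hk => h2 k hk) h3
  rwa [← Finset.range_eq_Ico] at this

lemma vmfXi_eval {m : ℕ} (k : ℕ) (u : Fin m → ℝ) :
    vmfXi k u = (∏ e ∈ Finset.univ.filter (fun e : Fin m => (e : ℕ) < k), Real.sin (u e)) *
      (if h : k < m then Real.cos (u ⟨k, h⟩) else 1) := by
  rw [vmfXi, prod_vmfH, prod_cos_eval]
  congr 1
  split_ifs <;> simp_all

lemma vmf_filter_succ {m : ℕ} (s : Finset (Fin m)) (k : ℕ) (h : k < m)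
    (hmem : (⟨k, h⟩ : Fin m) ∈ s) :
    s.filter (fun e : Fin m => (e : ℕ) < k + 1)
      = insert ⟨k, h⟩ (s.filter (fun e : Fin m => (e : ℕ) < k)) := by
  ext e
  simp only [Finset.mem_filter, Finset.mem_insert, Fin.ext_iff]
  constructor
  · rintro ⟨hes, hlt⟩
    rcases Nat.lt_succ_iff_lt_or_eq.mp hlt with h' | h'
    · exact Or.inr ⟨hes, h'⟩
    · exact Or.inl h'
  · rintro (h' | ⟨hes, hlt⟩)
    · have : e = ⟨k, h⟩ := Fin.ext h'
      exact ⟨this ▸ hmem, by omega⟩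
    · exact ⟨hes, by omega⟩

lemma vmf_filter_succ_not {m : ℕ} (s : Finset (Fin m)) (k : ℕ)
    (hk : ∀ e ∈ s, (e : ℕ) ≠ k) :
    s.filter (fun e : Fin m => (e : ℕ) < k + 1)
      = s.filter (fun e : Fin m => (e : ℕ) < k) := by
  apply Finset.filter_congr
  intro e he
  have := hk e he
  constructor <;> intro h' <;> omega

lemma vmf_notmem_filter_lt {m : ℕ} (s : Finset (Fin m)) (k : ℕ) (h : k < m) :
    (⟨k, h⟩ : Fin m) ∉ s.filter (fun e : Fin m => (e : ℕ) < k) := by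
  simp

lemma vmf_sum_sq {m : ℕ} (u : Fin m → ℝ) :
    ∑ k ∈ Finset.range (m + 1), vmfXi k u * vmfXi k u = 1 := by
  set X : ℕ → ℝ := fun k => ∏ e ∈ Finset.univ.filter (fun e : Fin m => (e : ℕ) < k),
    Real.sin (u e) ^ 2 with hX
  have hsq : ∀ k, (∏ e ∈ Finset.univ.filter (fun e : Fin m => (e : ℕ) < k),
      Real.sin (u e)) * (∏ e ∈ Finset.univ.filter (fun e : Fin m => (e : ℕ) < k),
      Real.sin (u e)) = X k := by
    intro k
    rw [hX, ← Finset.prod_mul_distrib]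
    exact Finset.prod_congr rfl fun e _ => (sq (Real.sin (u e))).symm
  have hXsucc : ∀ k (h : k < m), X (k + 1) = Real.sin (u ⟨k, h⟩) ^ 2 * X k := by
    intro k h
    rw [hX]
    simp only []
    rw [vmf_filter_succ Finset.univ k h (Finset.mem_univ _),
      Finset.prod_insert (vmf_notmem_filter_lt Finset.univ k h)]
  have hX0 : X 0 = 1 := by
    rw [hX]
    simp
  rw [← hX0]
  apply vmf_telesum0 m X
  · intro k hk
    rw [vmfXi_eval, dif_pos hk]
    have := hXsucc k hk
    have h1 := hsq k
    have h2 := Real.sin_sq_add_cos_sq (u ⟨k, hk⟩)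
    nlinarith [h1, h2, this]
  · rw [vmfXi_eval, dif_neg (by omega : ¬ m < m), mul_one]
    exact hsq m

lemma vmfD_eval {m : ℕ} (i : ℕ) (a : Fin m) (u : Fin m → ℝ) :
    vmfD i a u = vmfH' i a (u a) *
      ((∏ e ∈ (Finset.univ.erase a).filter (fun e : Fin m => (e : ℕ) < i), Real.sin (u e)) *
       (if h : i < m then
          (if (⟨i, h⟩ : Fin m) ∈ Finset.univ.erase a then Real.cos (u ⟨i, h⟩) else 1) else 1)) := by
  rw [vmfD, prod_vmfH, prod_cos_eval]

lemma vmf_filter_insert {m : ℕ} (s : Finset (Fin m)) (c : Fin m) (k : ℕ)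
    (hc : c ∈ s) (hck : (c : ℕ) < k) :
    s.filter (fun e : Fin m => (e : ℕ) < k)
      = insert c ((s.erase c).filter (fun e : Fin m => (e : ℕ) < k)) := by
  ext e
  simp only [Finset.mem_filter, Finset.mem_insert, Finset.mem_erase]
  constructor
  · rintro ⟨hes, hlt⟩
    by_cases h : e = c
    · exact Or.inl h
    · exact Or.inr ⟨⟨h, hes⟩, hlt⟩
  · rintro (h | ⟨⟨_, hes⟩, hlt⟩)
    · exact ⟨h ▸ hc, h ▸ hck⟩
    · exact ⟨hes, hlt⟩

lemma vmf_filter_erase {m : ℕ} (s : Finset (Fin m)) (c : Fin m) (k : ℕ)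
    (h : ¬ (c : ℕ) < k) :
    (s.erase c).filter (fun e : Fin m => (e : ℕ) < k)
      = s.filter (fun e : Fin m => (e : ℕ) < k) := by
  ext e
  simp only [Finset.mem_filter, Finset.mem_erase]
  constructor
  · rintro ⟨⟨_, hes⟩, hlt⟩
    exact ⟨hes, hlt⟩
  · rintro ⟨hes, hlt⟩
    refine ⟨⟨?_, hes⟩, hlt⟩
    intro he
    exact h (he ▸ hlt)

lemma vmf_metric_diag {m : ℕ} (a : Fin m) (u : Fin m → ℝ) :
    ∑ k ∈ Finset.range (m + 1), vmfD k a u * vmfD k a u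
      = ∏ e ∈ Finset.univ.filter (fun e : Fin m => (e : ℕ) < (a : ℕ)), Real.sin (u e) ^ 2 := by
  classical
  set E : Finset (Fin m) := Finset.univ.erase a with hE
  set X : ℕ → ℝ := fun k => ∏ e ∈ E.filter (fun e : Fin m => (e : ℕ) < k),
    Real.sin (u e) ^ 2 with hX
  have hsq : ∀ k, (∏ e ∈ E.filter (fun e : Fin m => (e : ℕ) < k), Real.sin (u e)) ^ 2
      = X k := by
    intro k
    rw [hX, ← Finset.prod_pow]
  have hXsucc : ∀ k (h : k < m), k ≠ (a : ℕ) →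
      X (k + 1) = Real.sin (u ⟨k, h⟩) ^ 2 * X k := by
    intro k h hka
    rw [hX]
    simp only []
    rw [vmf_filter_succ E k h (by simp [hE, Fin.ext_iff, hka]),
      Finset.prod_insert (vmf_notmem_filter_lt E k h)]
  have hXa : X ((a : ℕ) + 1) = X (a : ℕ) := by
    rw [hX]
    simp only []
    rw [vmf_filter_succ_not E (a : ℕ) (fun e he => by
      have : e ≠ a := Finset.ne_of_mem_erase (hE ▸ he)
      simp [Fin.ext_iff] at this ⊢
      omega)]
  have hXuniv : X (a : ℕ) = ∏ e ∈ Finset.univ.filter (fun e : Fin m => (e : ℕ) < (a : ℕ)),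
      Real.sin (u e) ^ 2 := by
    rw [hX]
    simp only []
    rw [hE, vmf_filter_erase Finset.univ a (a : ℕ) (lt_irrefl _)]
  rw [vmf_telesum m (a : ℕ) a.isLt (Real.sin (u a) ^ 2) (Real.cos (u a) ^ 2) X
    (fun k => vmfD k a u * vmfD k a u) ?h0 ?h1 ?h2 ?h3 hXa]
  · rw [hXuniv]
    have := Real.sin_sq_add_cos_sq (u a)
    linear_combination (∏ e ∈ Finset.univ.filter (fun e : Fin m => (e : ℕ) < (a : ℕ)),
      Real.sin (u e) ^ 2) * this
  case h0 =>
    intro k hk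
    beta_reduce
    have h0 : vmfH' (m := m) k a (u a) = 0 := by
      rw [vmfH']
      rw [if_neg (by omega), if_neg (by omega)]
    rw [vmfD_eval, h0]
    ring
  case h1 =>
    beta_reduce
    have h1 : vmfH' (m := m) (a : ℕ) a (u a) = -Real.sin (u a) := by
      rw [vmfH', if_neg (by omega), if_pos rfl]
    have h2 : (if h : (a : ℕ) < m then
        (if (⟨(a : ℕ), h⟩ : Fin m) ∈ Finset.univ.erase a then Real.cos (u ⟨(a : ℕ), h⟩) else 1)
        else 1) = 1 := by
      rw [dif_pos a.isLt]
      simp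
    rw [vmfD_eval, h1, ← hE] at *
    rw [h2]
    have := hsq (a : ℕ)
    linear_combination Real.sin (u a) ^ 2 * this
  case h2 =>
    intro k hak hkm
    beta_reduce
    have h1 : vmfH' (m := m) k a (u a) = Real.cos (u a) := by
      rw [vmfH', if_pos (by omega)]
    have h2 : (if h : k < m then
        (if (⟨k, h⟩ : Fin m) ∈ Finset.univ.erase a then Real.cos (u ⟨k, h⟩) else 1)
        else 1) = Real.cos (u ⟨k, hkm⟩) := by
      rw [dif_pos hkm, if_pos (by simp [Fin.ext_iff]; omega)]
    rw [vmfD_eval, h1, ← hE, h2]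
    have hs := hsq k
    have hc := Real.sin_sq_add_cos_sq (u ⟨k, hkm⟩)
    rw [hXsucc k hkm (by omega)]
    set P := ∏ e ∈ E.filter (fun e : Fin m => (e : ℕ) < k), Real.sin (u e)
    linear_combination (Real.cos (u a) ^ 2 * P ^ 2) * hc +
      (Real.cos (u a) ^ 2 * (1 - Real.sin (u ⟨k, hkm⟩) ^ 2)) * hs
  case h3 =>
    beta_reduce
    have h1 : vmfH' (m := m) m a (u a) = Real.cos (u a) := by
      rw [vmfH', if_pos a.isLt]
    rw [vmfD_eval, h1, ← hE, dif_neg (lt_irrefl m)]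
    have := hsq m
    linear_combination Real.cos (u a) ^ 2 * this

lemma vmf_metric_off {m : ℕ} (a b : Fin m) (hab : (a : ℕ) < (b : ℕ)) (u : Fin m → ℝ) :
    ∑ k ∈ Finset.range (m + 1), vmfD k a u * vmfD k b u = 0 := by
  classical
  set E : Finset (Fin m) := (Finset.univ.erase a).erase b with hE
  set X : ℕ → ℝ := fun k => ∏ e ∈ E.filter (fun e : Fin m => (e : ℕ) < k),
    Real.sin (u e) ^ 2 with hX
  set C : ℝ := Real.cos (u a) * Real.sin (u a) * Real.cos (u b) * Real.sin (u b) with hC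
  have hsq : ∀ k, (∏ e ∈ E.filter (fun e : Fin m => (e : ℕ) < k), Real.sin (u e)) ^ 2
      = X k := by
    intro k
    rw [hX, ← Finset.prod_pow]
  have hXsucc : ∀ k (h : k < m), k ≠ (a : ℕ) → k ≠ (b : ℕ) →
      X (k + 1) = Real.sin (u ⟨k, h⟩) ^ 2 * X k := by
    intro k h hka hkb
    rw [hX]
    simp only []
    rw [vmf_filter_succ E k h (by simp [hE, Fin.ext_iff]; omega),
      Finset.prod_insert (vmf_notmem_filter_lt E k h)]
  have hXb : X ((b : ℕ) + 1) = X (b : ℕ) := by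
    rw [hX]
    simp only []
    rw [vmf_filter_succ_not E (b : ℕ) (fun e he => by
      rw [hE] at he
      have h1 := Finset.ne_of_mem_erase he
      simp [Fin.ext_iff] at h1 ⊢
      omega)]
  -- the two erase sets
  have hEab : (Finset.univ.erase b).erase a = E := by
    rw [hE, Finset.erase_right_comm]
  have key := vmf_telesum m (b : ℕ) b.isLt (-C) C X
    (fun k => vmfD k a u * vmfD k b u) ?h0 ?h1 ?h2 ?h3 hXb
  · rw [key]
    ring
  case h0 =>
    intro k hk
    beta_reduce
    have h0 : vmfH' (m := m) k b (u b) = 0 := by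
      rw [vmfH', if_neg (by omega), if_neg (by omega)]
    rw [vmfD_eval k b, h0]
    ring
  case h1 =>
    beta_reduce
    have hba : vmfH' (m := m) (b : ℕ) a (u a) = Real.cos (u a) := by
      rw [vmfH', if_pos hab]
    have hbb : vmfH' (m := m) (b : ℕ) b (u b) = -Real.sin (u b) := by
      rw [vmfH', if_neg (by omega), if_pos rfl]
    have hinner_a : (if h : (b : ℕ) < m then
        (if (⟨(b : ℕ), h⟩ : Fin m) ∈ Finset.univ.erase a then Real.cos (u ⟨(b : ℕ), h⟩) else 1)
        else 1) = Real.cos (u b) := by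
      rw [dif_pos b.isLt, if_pos (by simp [Fin.ext_iff]; omega)]
    have hinner_b : (if h : (b : ℕ) < m then
        (if (⟨(b : ℕ), h⟩ : Fin m) ∈ Finset.univ.erase b then Real.cos (u ⟨(b : ℕ), h⟩) else 1)
        else 1) = 1 := by
      rw [dif_pos b.isLt]
      simp
    have hPa : (Finset.univ.erase a).filter (fun e : Fin m => (e : ℕ) < (b : ℕ))
        = E.filter (fun e : Fin m => (e : ℕ) < (b : ℕ)) := by
      rw [hE, vmf_filter_erase (Finset.univ.erase a) b (b : ℕ) (lt_irrefl _)]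
    have hPb : (Finset.univ.erase b).filter (fun e : Fin m => (e : ℕ) < (b : ℕ))
        = insert a (E.filter (fun e : Fin m => (e : ℕ) < (b : ℕ))) := by
      rw [← hEab]
      exact vmf_filter_insert (Finset.univ.erase b) a (b : ℕ)
        (by simp [Fin.ext_iff]; omega) hab
    have hanotmem : a ∉ E.filter (fun e : Fin m => (e : ℕ) < (b : ℕ)) := by
      simp [hE]
    rw [vmfD_eval, vmfD_eval, hba, hbb, hinner_a, hinner_b, hPa, hPb,
      Finset.prod_insert hanotmem]
    have := hsq (b : ℕ)
    set P := ∏ e ∈ E.filter (fun e : Fin m => (e : ℕ) < (b : ℕ)), Real.sin (u e)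
    linear_combination (-C) * this
  case h2 =>
    intro k hbk hkm
    beta_reduce
    have hka : vmfH' (m := m) k a (u a) = Real.cos (u a) := by
      rw [vmfH', if_pos (by omega)]
    have hkb : vmfH' (m := m) k b (u b) = Real.cos (u b) := by
      rw [vmfH', if_pos (by omega)]
    have hinner_a : (if h : k < m then
        (if (⟨k, h⟩ : Fin m) ∈ Finset.univ.erase a then Real.cos (u ⟨k, h⟩) else 1)
        else 1) = Real.cos (u ⟨k, hkm⟩) := by
      rw [dif_pos hkm, if_pos (by simp [Fin.ext_iff]; omega)]
    have hinner_b : (if h : k < m then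
        (if (⟨k, h⟩ : Fin m) ∈ Finset.univ.erase b then Real.cos (u ⟨k, h⟩) else 1)
        else 1) = Real.cos (u ⟨k, hkm⟩) := by
      rw [dif_pos hkm, if_pos (by simp [Fin.ext_iff]; omega)]
    have hPa : (Finset.univ.erase a).filter (fun e : Fin m => (e : ℕ) < k)
        = insert b (E.filter (fun e : Fin m => (e : ℕ) < k)) := by
      rw [hE]
      exact vmf_filter_insert (Finset.univ.erase a) b k
        (by simp [Fin.ext_iff]; omega) (by omega)
    have hPb : (Finset.univ.erase b).filter (fun e : Fin m => (e : ℕ) < k)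
        = insert a (E.filter (fun e : Fin m => (e : ℕ) < k)) := by
      rw [← hEab]
      exact vmf_filter_insert (Finset.univ.erase b) a k
        (by simp [Fin.ext_iff]; omega) (by omega)
    have hanotmem : a ∉ E.filter (fun e : Fin m => (e : ℕ) < k) := by
      simp [hE]
    have hbnotmem : b ∉ E.filter (fun e : Fin m => (e : ℕ) < k) := by
      simp [hE]
    rw [vmfD_eval, vmfD_eval, hka, hkb, hinner_a, hinner_b, hPa, hPb,
      Finset.prod_insert hanotmem, Finset.prod_insert hbnotmem]
    have hs := hsq k
    have hc := Real.sin_sq_add_cos_sq (u ⟨k, hkm⟩)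
    rw [hXsucc k hkm (by omega) (by omega)]
    set P := ∏ e ∈ E.filter (fun e : Fin m => (e : ℕ) < k), Real.sin (u e)
    linear_combination (C * P ^ 2) * hc + (C * (1 - Real.sin (u ⟨k, hkm⟩) ^ 2)) * hs
  case h3 =>
    beta_reduce
    have hka : vmfH' (m := m) m a (u a) = Real.cos (u a) := by
      rw [vmfH', if_pos a.isLt]
    have hkb : vmfH' (m := m) m b (u b) = Real.cos (u b) := by
      rw [vmfH', if_pos b.isLt]
    have hPa : (Finset.univ.erase a).filter (fun e : Fin m => (e : ℕ) < m)
        = insert b (E.filter (fun e : Fin m => (e : ℕ) < m)) := by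
      rw [hE]
      exact vmf_filter_insert (Finset.univ.erase a) b m
        (by simp [Fin.ext_iff]; omega) b.isLt
    have hPb : (Finset.univ.erase b).filter (fun e : Fin m => (e : ℕ) < m)
        = insert a (E.filter (fun e : Fin m => (e : ℕ) < m)) := by
      rw [← hEab]
      exact vmf_filter_insert (Finset.univ.erase b) a m
        (by simp [Fin.ext_iff]; omega) a.isLt
    have hanotmem : a ∉ E.filter (fun e : Fin m => (e : ℕ) < m) := by
      simp [hE]
    have hbnotmem : b ∉ E.filter (fun e : Fin m => (e : ℕ) < m) := by
      simp [hE]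
    rw [vmfD_eval, vmfD_eval, hka, hkb, dif_neg (lt_irrefl m), dif_neg (lt_irrefl m),
      hPa, hPb, Finset.prod_insert hanotmem, Finset.prod_insert hbnotmem]
    have := hsq m
    linear_combination C * this

lemma vmf_metric {m : ℕ} (a b : Fin m) (u : Fin m → ℝ) :
    ∑ k ∈ Finset.range (m + 1), vmfD k a u * vmfD k b u
      = if a = b then
          ∏ e ∈ Finset.univ.filter (fun e : Fin m => (e : ℕ) < (a : ℕ)), Real.sin (u e) ^ 2
        else 0 := by
  by_cases h : a = b
  · subst h
    rw [if_pos rfl]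
    exact vmf_metric_diag a u
  · rw [if_neg h]
    rcases lt_or_gt_of_ne (fun hv => h (Fin.ext hv) : (a : ℕ) ≠ (b : ℕ)) with h' | h'
    · exact vmf_metric_off a b h' u
    · rw [Finset.sum_congr rfl (fun k _ => mul_comm (vmfD k a u) (vmfD k b u))]
      exact vmf_metric_off b a h' u

lemma vmf_ortho {m : ℕ} (a : Fin m) (u : Fin m → ℝ) :
    ∑ k ∈ Finset.range (m + 1), vmfXi k u * vmfD k a u = 0 := by
  have hfun : (fun v : Fin m → ℝ => ∑ k ∈ Finset.range (m + 1), vmfXi k v * vmfXi k v)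
      = fun _ => (1 : ℝ) := funext fun v => vmf_sum_sq v
  have h0 : pd a (fun v : Fin m → ℝ => ∑ k ∈ Finset.range (m + 1), vmfXi k v * vmfXi k v) u
      = 0 := by
    rw [hfun]
    exact pd_const 1 a u
  rw [pd_sum _ (fun k v => vmfXi k v * vmfXi k v) a u (fun k _ => (vmfXi_diff k u).mul (vmfXi_diff k u))] at h0
  have hterm : ∀ k ∈ Finset.range (m + 1),
      pd a (fun v => vmfXi k v * vmfXi k v) u = 2 * (vmfXi k u * vmfD k a u) := by
    intro k _
    rw [pd_mul _ _ a u (vmfXi_diff k u) (vmfXi_diff k u), pd_vmfXi]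
    ring
  rw [Finset.sum_congr rfl hterm, ← Finset.mul_sum] at h0
  linarith

lemma vmf_second {m : ℕ} (a b : Fin m) (u : Fin m → ℝ) :
    ∑ k ∈ Finset.range (m + 1), vmfXi k u * pd a (vmfD k b) u
      = - (if a = b then
          ∏ e ∈ Finset.univ.filter (fun e : Fin m => (e : ℕ) < (a : ℕ)), Real.sin (u e) ^ 2
        else 0) := by
  have hfun : (fun v : Fin m → ℝ => ∑ k ∈ Finset.range (m + 1), vmfXi k v * vmfD k b v)
      = fun _ => (0 : ℝ) := funext fun v => vmf_ortho b v
  have h0 : pd a (fun v : Fin m → ℝ => ∑ k ∈ Finset.range (m + 1), vmfXi k v * vmfD k b v) u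
      = 0 := by
    rw [hfun]
    exact pd_const 0 a u
  rw [pd_sum _ (fun k v => vmfXi k v * vmfD k b v) a u (fun k _ => (vmfXi_diff k u).mul (vmfD_diff k b u))] at h0
  have hterm : ∀ k ∈ Finset.range (m + 1),
      pd a (fun v => vmfXi k v * vmfD k b v) u
        = vmfD k a u * vmfD k b u + vmfXi k u * pd a (vmfD k b) u := by
    intro k _
    rw [pd_mul _ _ a u (vmfXi_diff k u) (vmfD_diff k b u), pd_vmfXi]
  rw [Finset.sum_congr rfl hterm, Finset.sum_add_distrib, vmf_metric a b u] at h0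
  linarith

/-- for the von Mises–Fisher model, `θ(u) = r ξ(u)`, `η(u) = r† ξ(u)` with
`ξ(u) ∈ S^m` the standard spherical parametrization, the vector `ξ = (1/r)θ = (1/r†)η` is
the unit normal (orthogonal to all tangent vectors, of squared length 1), the metric is
`g_{ab} = δ_{ab} r r† ∏_{c<a} sin² u^c`, the Euler–Schouten curvatures are
`H^{(1)}_{abκ} = −(1/r†) g_{ab}`, `H^{(−1)}_{abκ} = −(1/r) g_{ab}`, and by the Gauss
equation `R^{(±1)}_{abcd} = (1/(r r†))(g_{ad}g_{bc} − g_{ac}g_{bd})`. -/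
theorem stmt16 {m : ℕ} (hm : 0 < m) (r rd : ℝ) (hr : 0 < r) (hrd0 : 0 < rd) (hrd1 : rd < 1)
    (ξ : Fin (m + 1) → (Fin m → ℝ) → ℝ)
    (hξ : ∀ i u, ξ i u =
      (∏ e ∈ Finset.univ.filter (fun e : Fin m => (e : ℕ) < (i : ℕ)), Real.sin (u e)) *
      (if h : (i : ℕ) < m then Real.cos (u ⟨i, h⟩) else 1))
    (θ η : Fin (m + 1) → (Fin m → ℝ) → ℝ)
    (hθ : ∀ i u, θ i u = r * ξ i u) (hη : ∀ i u, η i u = rd * ξ i u)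
    (g H1 Hm1 : Fin m → Fin m → (Fin m → ℝ) → ℝ)
    (hg : ∀ a b u, g a b u = ∑ i, pd a (θ i) u * pd b (η i) u)
    (hH1 : ∀ a b u, H1 a b u = ∑ i, pd a (fun v => pd b (θ i) v) u * ξ i u)
    (hHm1 : ∀ a b u, Hm1 a b u = ∑ i, pd a (fun v => pd b (η i) v) u * ξ i u) :
    ∀ (a b c e : Fin m) (u : Fin m → ℝ),
      (∑ i, ξ i u * pd a (η i) u = 0) ∧
      (∑ i, ξ i u * pd a (θ i) u = 0) ∧
      (∑ i, ξ i u * ξ i u = 1) ∧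
      g a b u = (if a = b then
        r * rd * ∏ e' ∈ Finset.univ.filter (fun e' : Fin m => (e' : ℕ) < (a : ℕ)),
          Real.sin (u e') ^ 2 else 0) ∧
      H1 a b u = -(1 / rd) * g a b u ∧
      Hm1 a b u = -(1 / r) * g a b u ∧
      Hm1 a e u * H1 b c u - Hm1 b e u * H1 a c u
        = (1 / (r * rd)) * (g a e u * g b c u - g a c u * g b e u) := by
  intro a b c e u
  have hr0 : r ≠ 0 := ne_of_gt hr
  have hrd0' : rd ≠ 0 := ne_of_gt hrd0
  have hξfun : ∀ i : Fin (m + 1), ξ i = vmfXi (m := m) (i : ℕ) :=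
    fun i => funext fun v => by rw [hξ, vmfXi_eval]
  have hθfun : ∀ i : Fin (m + 1), θ i = fun v => r * vmfXi (m := m) (i : ℕ) v :=
    fun i => funext fun v => by rw [hθ, hξfun i]
  have hηfun : ∀ i : Fin (m + 1), η i = fun v => rd * vmfXi (m := m) (i : ℕ) v :=
    fun i => funext fun v => by rw [hη, hξfun i]
  have pdθ : ∀ (i : Fin (m + 1)) (d : Fin m) (v : Fin m → ℝ),
      pd d (θ i) v = r * vmfD (m := m) (i : ℕ) d v := by
    intro i d v
    rw [hθfun i, pd_const_mul _ r d v (vmfXi_diff _ v), pd_vmfXi]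
  have pdη : ∀ (i : Fin (m + 1)) (d : Fin m) (v : Fin m → ℝ),
      pd d (η i) v = rd * vmfD (m := m) (i : ℕ) d v := by
    intro i d v
    rw [hηfun i, pd_const_mul _ rd d v (vmfXi_diff _ v), pd_vmfXi]
  -- metric value as a function of indices
  set M : Fin m → Fin m → ℝ := fun a b =>
    if a = b then
      ∏ e' ∈ Finset.univ.filter (fun e' : Fin m => (e' : ℕ) < (a : ℕ)), Real.sin (u e') ^ 2
    else 0 with hM
  have hgval : ∀ a b : Fin m, g a b u = r * rd * M a b := by
    intro a b
    rw [hg]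
    have : ∀ i : Fin (m + 1), pd a (θ i) u * pd b (η i) u
        = r * rd * (vmfD (m := m) (i : ℕ) a u * vmfD (m := m) (i : ℕ) b u) := by
      intro i
      rw [pdθ, pdη]
      ring
    rw [Finset.sum_congr rfl fun i _ => this i, ← Finset.mul_sum,
      Fin.sum_univ_eq_sum_range (fun k => vmfD (m := m) k a u * vmfD (m := m) k b u),
      vmf_metric a b u]
  have hH1val : ∀ a b : Fin m, H1 a b u = r * (- M a b) := by
    intro a b
    rw [hH1]
    have : ∀ i : Fin (m + 1), pd a (fun v => pd b (θ i) v) u * ξ i u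
        = r * (vmfXi (m := m) (i : ℕ) u * pd a (vmfD (m := m) (i : ℕ) b) u) := by
      intro i
      have hfn : (fun v => pd b (θ i) v) = fun v => r * vmfD (m := m) (i : ℕ) b v :=
        funext fun v => pdθ i b v
      rw [hfn, pd_const_mul _ r a u (vmfD_diff _ b u), hξfun i]
      ring
    rw [Finset.sum_congr rfl fun i _ => this i, ← Finset.mul_sum,
      Fin.sum_univ_eq_sum_range
        (fun k => vmfXi (m := m) k u * pd a (vmfD (m := m) k b) u),
      vmf_second a b u]
  have hHm1val : ∀ a b : Fin m, Hm1 a b u = rd * (- M a b) := by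
    intro a b
    rw [hHm1]
    have : ∀ i : Fin (m + 1), pd a (fun v => pd b (η i) v) u * ξ i u
        = rd * (vmfXi (m := m) (i : ℕ) u * pd a (vmfD (m := m) (i : ℕ) b) u) := by
      intro i
      have hfn : (fun v => pd b (η i) v) = fun v => rd * vmfD (m := m) (i : ℕ) b v :=
        funext fun v => pdη i b v
      rw [hfn, pd_const_mul _ rd a u (vmfD_diff _ b u), hξfun i]
      ring
    rw [Finset.sum_congr rfl fun i _ => this i, ← Finset.mul_sum,
      Fin.sum_univ_eq_sum_range
        (fun k => vmfXi (m := m) k u * pd a (vmfD (m := m) k b) u),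
      vmf_second a b u]
  have hortho : ∀ d : Fin m, ∑ i : Fin (m + 1),
      vmfXi (m := m) (i : ℕ) u * vmfD (m := m) (i : ℕ) d u = 0 := by
    intro d
    rw [Fin.sum_univ_eq_sum_range (fun k => vmfXi (m := m) k u * vmfD (m := m) k d u)]
    exact vmf_ortho d u
  refine ⟨?_, ?_, ?_, ?_, ?_, ?_, ?_⟩
  · have : ∀ i : Fin (m + 1), ξ i u * pd a (η i) u
        = rd * (vmfXi (m := m) (i : ℕ) u * vmfD (m := m) (i : ℕ) a u) := by
      intro i
      rw [pdη, hξfun i]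
      ring
    rw [Finset.sum_congr rfl fun i _ => this i, ← Finset.mul_sum, hortho a, mul_zero]
  · have : ∀ i : Fin (m + 1), ξ i u * pd a (θ i) u
        = r * (vmfXi (m := m) (i : ℕ) u * vmfD (m := m) (i : ℕ) a u) := by
      intro i
      rw [pdθ, hξfun i]
      ring
    rw [Finset.sum_congr rfl fun i _ => this i, ← Finset.mul_sum, hortho a, mul_zero]
  · have : ∀ i : Fin (m + 1), ξ i u * ξ i u
        = vmfXi (m := m) (i : ℕ) u * vmfXi (m := m) (i : ℕ) u := by
      intro i
      rw [hξfun i]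
    rw [Finset.sum_congr rfl fun i _ => this i,
      Fin.sum_univ_eq_sum_range (fun k => vmfXi (m := m) k u * vmfXi (m := m) k u)]
    exact vmf_sum_sq u
  · rw [hgval a b, hM]
    by_cases h : a = b <;> simp [h] <;> ring
  · rw [hH1val a b, hgval a b]
    field_simp
  · rw [hHm1val a b, hgval a b]
    field_simp
  · rw [hHm1val a e, hH1val b c, hHm1val b e, hH1val a c,
      hgval a e, hgval b c, hgval a c, hgval b e]
    field_simp
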